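/- Let Γ = Cay(G,S) be a Cayley digraph with Cayley index i (that is, the right regular representation of G has index i in A = Aut(Γ)). If A contains a regular subgroup H distinct from (the right regular representation of) G, then G has a proper subgroup of index at most i. -/

import Mathlib

/-- The automorphism group of a digraph given by an adjacency relation. -/
def dAut {V : Type*} (adj : V → V → Prop) : Subgroup (Equiv.Perm V) where
  carrier := {σ | ∀ u v : V, adj (σ u) (σ v) ↔ adj u v}
  one_mem' := by intro u v; rfl
  mul_mem' := by
    intro a b ha hb u v
    simp only [Set.mem_setOf_eq] at *
    rw [Equiv.Perm.mul_apply, Equiv.Perm.mul_apply, ha, hb]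
  inv_mem' := by
    intro a ha u v
    simpa using (ha (a⁻¹ u) (a⁻¹ v)).symm

/-- Adjacency of the Cayley digraph `Cay(G,S)`. -/
def cayAdj (G : Type*) [Group G] (S : Set G) : G → G → Prop :=
  fun u v => v * u⁻¹ ∈ S

/-- The right regular representation of `G` in `Equiv.Perm G`. -/
def rightReg (G : Type*) [Group G] : G →* Equiv.Perm G where
  toFun g := Equiv.mulRight g⁻¹
  map_one' := by ext x; simp
  map_mul' := by intro a b; ext x; simp [mul_assoc]

/-- The right regular representation of `G` as a subgroup of `Aut(Cay(G,S))`. -/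
def cayleyRR (G : Type*) [Group G] (S : Set G) :
    Subgroup (dAut (cayAdj G S)) :=
  ((rightReg G).range).subgroupOf (dAut (cayAdj G S))

/-- A subgroup of `Equiv.Perm V` is regular if it is sharply transitive on `V`. -/
def IsRegularSub {V : Type*} (H : Subgroup (Equiv.Perm V)) : Prop :=
  ∀ v w : V, ∃! h : H, (h : Equiv.Perm V) v = w

/-- Adjacency of the cartesian product of two digraphs. -/
def cartAdj {α β : Type*} (adjG : α → α → Prop) (adjD : β → β → Prop) :
    α × β → α × β → Prop :=
  fun u v => (u.1 = v.1 ∧ adjD u.2 v.2) ∨ (u.2 = v.2 ∧ adjG u.1 v.1)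

/-- `pathLe adj i u v` : there is a directed path of length at most `i` from `u` to `v`. -/
def pathLe {V : Type*} (adj : V → V → Prop) : ℕ → V → V → Prop
  | 0, u, v => u = v
  | (n+1), u, v => pathLe adj n u v ∨ ∃ w, pathLe adj n u w ∧ adj w v

lemma rightReg_injective (G : Type*) [Group G] : Function.Injective (rightReg G) := by
  intro a b h
  have := congrArg (fun σ : Equiv.Perm G => σ 1) h
  simpa [rightReg] using this

lemma rightReg_range_le_dAut (G : Type*) [Group G] (S : Set G) :
    (rightReg G).range ≤ dAut (cayAdj G S) := by
  rintro σ ⟨g, rfl⟩ u v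
  simp [rightReg, cayAdj, mul_assoc]

lemma card_of_regular {V : Type*} [Nonempty V] (H : Subgroup (Equiv.Perm V))
    (h : IsRegularSub H) : Nat.card H = Nat.card V := by
  classical
  obtain ⟨v⟩ := ‹Nonempty V›
  refine Nat.card_congr (Equiv.ofBijective (fun x : H => (x : Equiv.Perm V) v) ?_)
  constructor
  · intro a b hab
    obtain ⟨h', -, huniq⟩ := h v ((a : Equiv.Perm V) v)
    exact (huniq a rfl).trans (huniq b hab.symm).symm
  · intro w
    obtain ⟨h', hh', -⟩ := h v w
    exact ⟨h', hh'⟩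

/-- If the automorphism group of a Cayley digraph on `G` contains a regular subgroup
distinct from the right regular representation of `G`, then `G` has a proper subgroup
of index at most the Cayley index. -/
theorem stmt_1 {G : Type*} [Group G] [Fintype G] (S : Set G) (hS1 : (1 : G) ∉ S)
    (H : Subgroup (Equiv.Perm G)) (hHA : H ≤ dAut (cayAdj G S))
    (hreg : IsRegularSub H) (hne : H ≠ (rightReg G).range) :
    ∃ K : Subgroup G, K ≠ ⊤ ∧ K.index ≤ (cayleyRR G S).index := by
  classical
  set A : Subgroup (Equiv.Perm G) := dAut (cayAdj G S) with hA
  set R : Subgroup (Equiv.Perm G) := (rightReg G).range with hR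
  have hRA : R ≤ A := rightReg_range_le_dAut G S
  have hcardR : Nat.card R = Nat.card G :=
    Nat.card_congr (Equiv.ofBijective (rightReg G).rangeRestrict
      ⟨fun a b hab => rightReg_injective G (Subtype.ext_iff.mp hab),
        (rightReg G).rangeRestrict_surjective⟩).symm
  have hcardH : Nat.card H = Nat.card G := card_of_regular H hreg
  -- K := preimage of H
  refine ⟨H.comap (rightReg G), ?_, ?_⟩
  · intro htop
    apply hne
    have hRle : R ≤ H := by
      rintro σ ⟨g, rfl⟩
      have : g ∈ H.comap (rightReg G) := htop ▸ Subgroup.mem_top g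
      exact this
    exact (Subgroup.eq_of_le_of_card_ge hRle (le_of_eq (hcardH.trans hcardR.symm))).symm
  · rw [Subgroup.index_comap]
    -- goal : H.relindex (rightReg G).range ≤ (cayleyRR G S).index
    have hfin : ∀ (K L : Subgroup (Equiv.Perm G)), K.relIndex L ≠ 0 := by
      intro K L
      have : Finite L := Subgroup.instFiniteSubtypeMem L
      exact Subgroup.index_ne_zero_of_finite
    have h1 : H.relIndex R ≤ H.relIndex A :=
      Subgroup.relIndex_le_of_le_right hRA (hfin H A)
    have h2 : H.relIndex A = (cayleyRR G S).index := by
      have e1 : Nat.card (H.subgroupOf A) = Nat.card G := by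
        rw [Nat.card_congr (Subgroup.subgroupOfEquivOfLe hHA).toEquiv, hcardH]
      have e2 : Nat.card (cayleyRR G S) = Nat.card G := by
        rw [show cayleyRR G S = R.subgroupOf A from rfl,
          Nat.card_congr (Subgroup.subgroupOfEquivOfLe hRA).toEquiv, hcardR]
      have c1 : Nat.card (H.subgroupOf A) * (H.subgroupOf A).index = Nat.card A :=
        Subgroup.card_mul_index _
      have c2 : Nat.card (cayleyRR G S) * (cayleyRR G S).index = Nat.card A :=
        Subgroup.card_mul_index _
      have hpos : 0 < Nat.card G := Nat.card_pos
      have h3 := c1.trans c2.symm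
      rw [e1, e2] at h3
      have := Nat.eq_of_mul_eq_mul_left hpos h3
      simpa [Subgroup.relIndex] using this
    exact h1.trans_eq h2
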